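/- Let Φ be the ℂ[x,t^{±1}]-algebra endomorphism of ℂ[x,y,z,t^{±1},w] given by Φ(y)=xy - xw² - 2zw, Φ(z)=z+xw, Φ(w)=2w+yz+3xyw-3zw²-xw³. Then Φ(xy+z²+x+t³) = x²y+z²+x+t³. -/
import Mathlib


open MvPolynomial LaurentPolynomial

-- We work in ℂ[x,y,z,t^{±1},w] = (ℂ[t,t⁻¹])[x,y,z,w], with x = X 0, y = X 1,
-- z = X 2, w = X 3, and t = MvPolynomial.C (T 1).

/-- The ℂ[x,t^{±1}]-algebra endomorphism Φ. -/
noncomputable def PhiL :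
    MvPolynomial (Fin 4) (LaurentPolynomial ℂ) →ₐ[LaurentPolynomial ℂ]
      MvPolynomial (Fin 4) (LaurentPolynomial ℂ) :=
  aeval ![X 0,
    X 0 * X 1 - X 0 * X 3 ^ 2 - 2 * X 2 * X 3,
    X 2 + X 0 * X 3,
    2 * X 3 + X 1 * X 2 + 3 * X 0 * X 1 * X 3 - 3 * X 2 * X 3 ^ 2 - X 0 * X 3 ^ 3]

theorem stmt18 :
    PhiL (X 0 * X 1 + X 2 ^ 2 + X 0 + MvPolynomial.C (T 3)) =
      X 0 ^ 2 * X 1 + X 2 ^ 2 + X 0 + MvPolynomial.C (T 3) := by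
  simp only [PhiL, map_add, map_mul, map_pow, aeval_X, aeval_C, algHom_C,
    Matrix.cons_val_zero, Matrix.cons_val_one, Matrix.head_cons, Matrix.cons_val_two,
    Matrix.tail_cons, MvPolynomial.algebraMap_eq]
  ring
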